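/- For every positive integer h there exist, for infinitely many m, finite sets A, B_1, ..., B_h in a commutative group with |A| = m, |A + B_i| ≤ (1 + o(1))·α_i·m, and |A + B_1 + ... + B_h| ≥ (1 + o(1))·((1 - 1/h)^(h-1)/h)·α_1···α_h·m^(2 - 1/h). -/

import Mathlib

open Pointwise Finset

lemma prodAdd' {γ₁ γ₂ : Type*} [AddGroup γ₁] [AddGroup γ₂] [DecidableEq γ₁] [DecidableEq γ₂]
    (s u : Finset γ₁) (t v : Finset γ₂) :
    (s ×ˢ t) + (u ×ˢ v) = (s + u) ×ˢ (t + v) := by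
  ext ⟨a, b⟩
  simp only [Finset.mem_add, Finset.mem_product, Prod.exists, Prod.mk_add_mk, Prod.mk.injEq]
  aesop

lemma memFinsetSum' {ι γ : Type*} [AddCommMonoid γ] [DecidableEq γ] (s : Finset ι)
    (f : ι → Finset γ) (g : ι → γ) (hg : ∀ i ∈ s, g i ∈ f i) :
    ∑ i ∈ s, g i ∈ ∑ i ∈ s, f i := by
  classical
  induction s using Finset.induction with
  | empty => simp [Finset.mem_zero]
  | @insert a s ha ih =>
    rw [Finset.sum_insert ha, Finset.sum_insert ha]
    exact Finset.add_mem_add (hg _ (Finset.mem_insert_self _ _))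
      (ih fun i hi => hg i (Finset.mem_insert_of_mem hi))

lemma sumPair' {ι M N : Type*} [AddCommMonoid M] [AddCommMonoid N] (s : Finset ι)
    (f : ι → M) (g : ι → N) :
    ∑ i ∈ s, (f i, g i) = (∑ i ∈ s, f i, ∑ i ∈ s, g i) := by
  classical
  induction s using Finset.induction with
  | empty => simp; rfl
  | @insert a s ha ih => simp [Finset.sum_insert ha, ih, Prod.ext_iff]

set_option maxHeartbeats 2000000 in
theorem extremal_examples_exist (h : ℕ) (hh : 0 < h) :
    ∃ α : Fin h → ℚ, (∀ i, 0 < α i) ∧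
      ∀ ε : ℝ, 0 < ε → ∀ m₀ : ℕ, ∃ m : ℕ, m₀ ≤ m ∧
        ∃ (G : Type) (_ : AddCommGroup G) (_ : DecidableEq G)
          (A : Finset G) (B : Fin h → Finset G),
          A.card = m ∧
          (∀ i, ((A + B i).card : ℝ) ≤ (1 + ε) * (α i : ℝ) * m) ∧
          (1 - ε) * ((1 - 1 / (h : ℝ)) ^ (h - 1) / h) * (∏ i, (α i : ℝ)) *
              (m : ℝ) ^ ((2 : ℝ) - 1 / h) ≤ ((A + ∑ i, B i).card : ℝ) := by
  rcases Nat.lt_or_ge h 2 with hl | hl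
  · -- case h = 1
    have hh1 : h = 1 := by omega
    subst hh1
    refine ⟨fun _ => 1, fun _ => one_pos, ?_⟩
    intro ε hε m₀
    refine ⟨m₀, le_refl _, ℤ, inferInstance, inferInstance,
      (Finset.range m₀).image (Nat.cast : ℕ → ℤ), fun _ => {0}, ?_, ?_, ?_⟩
    · rw [Finset.card_image_of_injective _ Nat.cast_injective, Finset.card_range]
    · intro i
      have hA : ((Finset.range m₀).image (Nat.cast : ℕ → ℤ) + ({0} : Finset ℤ))
          = (Finset.range m₀).image (Nat.cast : ℕ → ℤ) := by
        simp [Finset.add_singleton]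
      rw [hA, Finset.card_image_of_injective _ Nat.cast_injective, Finset.card_range]
      push_cast
      nlinarith [Nat.cast_nonneg (α := ℝ) m₀]
    · have hS : (∑ _i : Fin 1, ({0} : Finset ℤ)) = {0} := by simp
      have hA : ((Finset.range m₀).image (Nat.cast : ℕ → ℤ) + ({0} : Finset ℤ))
          = (Finset.range m₀).image (Nat.cast : ℕ → ℤ) := by
        simp [Finset.add_singleton]
      rw [hS, hA, Finset.card_image_of_injective _ Nat.cast_injective, Finset.card_range]
      simp only [Nat.cast_one, Nat.sub_self, pow_zero, Finset.prod_const, Finset.card_univ,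
        Fintype.card_fin, Rat.cast_one, one_pow]
      rw [show ((2 : ℝ) - 1 / 1) = 1 by norm_num, Real.rpow_one]
      nlinarith [Nat.cast_nonneg (α := ℝ) m₀]
  · -- case h ≥ 2
    have hK1 : 1 ≤ h - 1 := by omega
    refine ⟨fun _ => (h : ℚ) / ((h - 1 : ℕ) : ℚ), fun _ => by
      apply div_pos <;> [exact_mod_cast hh; exact_mod_cast hK1], ?_⟩
    intro ε hε m₀
    set t : ℕ := max (max m₀ (Nat.ceil (3 / ε))) 1 with ht
    have ht1 : 1 ≤ t := le_max_right _ _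
    set n : ℕ := (h - 1) * t with hn
    have hn1 : 1 ≤ n := by
      rw [hn]; exact Nat.one_le_iff_ne_zero.mpr (by positivity)
    set d : ℕ := (h - 1) ^ (h - 2) * t ^ (h - 1) with hd
    have hd1 : 1 ≤ d := by
      rw [hd]; exact Nat.one_le_iff_ne_zero.mpr (by positivity)
    have e2 : h - 2 + 1 = h - 1 := by omega
    have hdn : d * (h - 1) = n ^ (h - 1) := by
      calc d * (h - 1) = ((h - 1) ^ (h - 2) * (h - 1)) * t ^ (h - 1) := by rw [hd]; ring
        _ = (h - 1) ^ (h - 2 + 1) * t ^ (h - 1) := by rw [pow_succ]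
        _ = (h - 1) ^ (h - 1) * t ^ (h - 1) := by rw [e2]
        _ = n ^ (h - 1) := by rw [hn, mul_pow]
    set m : ℕ := n ^ h + d with hm
    have hmm₀ : m₀ ≤ m := by
      calc m₀ ≤ t := le_trans (le_max_left _ _) (le_max_left _ _)
        _ ≤ n := by rw [hn]; exact Nat.le_mul_of_pos_left t (by omega)
        _ ≤ n ^ h := Nat.le_self_pow (by omega) n
        _ ≤ m := Nat.le_add_right _ _
    haveI : NeZero n := ⟨by omega⟩
    refine ⟨m, hmm₀, (Fin h → ZMod n) × ZMod (d + 1), inferInstance, inferInstance, ?_⟩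
    set Dc : Finset (ZMod (d + 1)) := ({0} : Finset (ZMod (d+1)))ᶜ with hDc
    set A : Finset ((Fin h → ZMod n) × ZMod (d + 1)) :=
      ((Finset.univ : Finset (Fin h → ZMod n)) ×ˢ ({0} : Finset (ZMod (d+1)))) ∪
        (({0} : Finset (Fin h → ZMod n)) ×ˢ Dc) with hA
    set L : Fin h → Finset (Fin h → ZMod n) :=
      fun i => Finset.univ.image (fun c : ZMod n => Pi.single i c) with hL
    set B : Fin h → Finset ((Fin h → ZMod n) × ZMod (d + 1)) :=
      fun i => (L i) ×ˢ ({0} : Finset (ZMod (d+1))) with hB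
    have cardU : (Finset.univ : Finset (Fin h → ZMod n)).card = n ^ h := by
      rw [Finset.card_univ, Fintype.card_fun, ZMod.card, Fintype.card_fin]
    have cardDc : Dc.card = d := by
      rw [hDc, Finset.card_compl, Finset.card_singleton, ZMod.card]
      omega
    have cardL : ∀ i, (L i).card = n := by
      intro i
      rw [hL]
      rw [Finset.card_image_of_injective _ (Pi.single_injective i), Finset.card_univ,
        ZMod.card]
    have disjA : Disjoint ((Finset.univ : Finset (Fin h → ZMod n)) ×ˢ ({0} : Finset (ZMod (d+1))))
        (({0} : Finset (Fin h → ZMod n)) ×ˢ Dc) := by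
      rw [Finset.disjoint_left]
      rintro ⟨x, y⟩ hx hy
      simp only [Finset.mem_product, Finset.mem_singleton, hDc, Finset.mem_compl] at hx hy
      exact hy.2 hx.2
    have cardA : A.card = m := by
      rw [hA, Finset.card_union_of_disjoint disjA, Finset.card_product, Finset.card_product,
        cardU, cardDc, Finset.card_singleton, Finset.card_singleton, hm]
      ring
    have hzeroL : ∀ i, (0 : Fin h → ZMod n) ∈ L i := by
      intro i
      rw [hL]
      exact Finset.mem_image.mpr ⟨0, Finset.mem_univ _, Pi.single_zero i⟩
    have sumAB : ∀ i, A + B i =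
        ((Finset.univ : Finset (Fin h → ZMod n)) ×ˢ ({0} : Finset (ZMod (d+1)))) ∪
          ((L i) ×ˢ Dc) := by
      intro i
      have g1 : (Finset.univ : Finset (Fin h → ZMod n)) + L i = Finset.univ :=
        Finset.univ_add_of_zero_mem (hzeroL i)
      have g2 : ({0} : Finset (ZMod (d+1))) + ({0} : Finset (ZMod (d+1))) = {0} := by
        rw [Finset.singleton_add_singleton, add_zero]
      have g3 : ({0} : Finset (Fin h → ZMod n)) + L i = L i := by
        simp [Finset.singleton_add]
      have g4 : Dc + ({0} : Finset (ZMod (d+1))) = Dc := by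
        simp [Finset.add_singleton]
      rw [hA, hB, Finset.union_add, prodAdd', prodAdd', g1, g2, g3, g4]
    have disjAB : ∀ i, Disjoint
        ((Finset.univ : Finset (Fin h → ZMod n)) ×ˢ ({0} : Finset (ZMod (d+1))))
        ((L i) ×ˢ Dc) := by
      intro i
      rw [Finset.disjoint_left]
      rintro ⟨x, y⟩ hx hy
      simp only [Finset.mem_product, Finset.mem_singleton, hDc, Finset.mem_compl] at hx hy
      exact hy.2 hx.2
    have cardAB : ∀ i, (A + B i).card = n ^ h + n * d := by
      intro i
      rw [sumAB i, Finset.card_union_of_disjoint (disjAB i), Finset.card_product,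
        Finset.card_product, cardU, cardDc, cardL i, Finset.card_singleton]
      ring
    have hsum : ∀ v : Fin h → ZMod n, (v, (0 : ZMod (d+1))) ∈ ∑ i, B i := by
      intro v
      have hmem := memFinsetSum' Finset.univ B
        (fun i => (Pi.single i (v i), (0 : ZMod (d+1)))) (by
          intro i _
          rw [hB]
          exact Finset.mem_product.mpr
            ⟨Finset.mem_image.mpr ⟨v i, Finset.mem_univ _, rfl⟩, Finset.mem_singleton_self _⟩)
      rwa [sumPair', Finset.univ_sum_single, Finset.sum_const_zero] at hmem
    have fullAB : A + ∑ i, B i = Finset.univ := by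
      apply Finset.eq_univ_of_forall
      rintro ⟨v, j⟩
      by_cases hj : j = 0
      · subst hj
        have h1 : ((v, (0 : ZMod (d+1))) : (Fin h → ZMod n) × ZMod (d+1)) ∈ A := by
          rw [hA]
          exact Finset.mem_union_left _
            (Finset.mem_product.mpr ⟨Finset.mem_univ _, Finset.mem_singleton_self _⟩)
        have h2 := Finset.add_mem_add h1 (hsum 0)
        simpa using h2
      · have h1 : (((0 : Fin h → ZMod n), j) : (Fin h → ZMod n) × ZMod (d+1)) ∈ A := by
          rw [hA]
          refine Finset.mem_union_right _ (Finset.mem_product.mpr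
            ⟨Finset.mem_singleton_self _, ?_⟩)
          rw [hDc]
          exact Finset.mem_compl.mpr (by simpa using hj)
        have h2 := Finset.add_mem_add h1 (hsum v)
        simpa using h2
    have cardFull : (A + ∑ i, B i).card = n ^ h * (d + 1) := by
      rw [fullAB, Finset.card_univ, Fintype.card_prod, Fintype.card_fun, ZMod.card,
        ZMod.card, Fintype.card_fin]
    -- real-number facts
    have hH0 : (0 : ℝ) < (h : ℝ) := by exact_mod_cast hh
    have hKr : (1 : ℝ) ≤ ((h - 1 : ℕ) : ℝ) := by exact_mod_cast hK1
    have hK0 : (0 : ℝ) < ((h - 1 : ℕ) : ℝ) := by linarith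
    have hnr : (1 : ℝ) ≤ (n : ℝ) := by exact_mod_cast hn1
    have hn0 : (0 : ℝ) < (n : ℝ) := by linarith
    have hdr : (1 : ℝ) ≤ (d : ℝ) := by exact_mod_cast hd1
    have hdnr : (d : ℝ) * ((h - 1 : ℕ) : ℝ) = (n : ℝ) ^ (h - 1) := by exact_mod_cast hdn
    have hmr : (m : ℝ) = (n : ℝ) ^ h + (d : ℝ) := by rw [hm]; push_cast; ring
    have hnh : (n : ℝ) ^ h = (n : ℝ) ^ (h - 1) * (n : ℝ) := by
      rw [← pow_succ]
      congr 1
      omega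
    have hKH : ((h - 1 : ℕ) : ℝ) + 1 = (h : ℝ) := by
      rw [Nat.cast_sub (by omega : 1 ≤ h)]
      ring
    have hH2 : (2 : ℝ) ≤ (h : ℝ) := by exact_mod_cast hl
    have hcast : (↑((h : ℚ) / ((h - 1 : ℕ) : ℚ)) : ℝ) = (h : ℝ) / ((h - 1 : ℕ) : ℝ) := by
      push_cast
      ring
    refine ⟨A, B, cardA, ?_, ?_⟩
    · -- upper bound
      intro i
      beta_reduce
      rw [cardAB i, hcast]
      have lhs_eq : ((n ^ h + n * d : ℕ) : ℝ) = (n : ℝ) * (d : ℝ) * (h : ℝ) := by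
        push_cast
        rw [hnh, ← hdnr, ← hKH]
        ring
      rw [lhs_eq]
      have hmge : ((h - 1 : ℕ) : ℝ) * ((n : ℝ) * (d : ℝ)) ≤ (m : ℝ) := by
        rw [hmr, hnh, ← hdnr]
        nlinarith
      have h1 : (h : ℝ) * ((n : ℝ) * (d : ℝ)) ≤ ((h : ℝ) / ((h - 1 : ℕ) : ℝ)) * (m : ℝ) := by
        have := mul_le_mul_of_nonneg_left hmge (le_of_lt (div_pos hH0 hK0))
        calc (h : ℝ) * ((n : ℝ) * (d : ℝ))
            = ((h : ℝ) / ((h - 1 : ℕ) : ℝ) * ((h - 1 : ℕ) : ℝ)) * ((n : ℝ) * (d : ℝ)) := by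
              rw [div_mul_cancel₀ _ (ne_of_gt hK0)]
          _ = ((h : ℝ) / ((h - 1 : ℕ) : ℝ)) * (((h - 1 : ℕ) : ℝ) * ((n : ℝ) * (d : ℝ))) := by
              ring
          _ ≤ ((h : ℝ) / ((h - 1 : ℕ) : ℝ)) * (m : ℝ) := this
      have h2 : (0 : ℝ) ≤ ((h : ℝ) / ((h - 1 : ℕ) : ℝ)) * (m : ℝ) := by positivity
      nlinarith
    · -- lower bound
      beta_reduce
      rw [cardFull]
      have hprod : (∏ _i : Fin h, (↑((h : ℚ) / ((h - 1 : ℕ) : ℚ)) : ℝ))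
          = ((h : ℝ) / ((h - 1 : ℕ) : ℝ)) ^ h := by
        rw [Finset.prod_const, Finset.card_univ, Fintype.card_fin, hcast]
      have hone : (1 : ℝ) - 1 / (h : ℝ) = ((h - 1 : ℕ) : ℝ) / (h : ℝ) := by
        rw [Nat.cast_sub (by omega : 1 ≤ h)]
        field_simp
        simp
      have e3 : ((h : ℝ) / ((h - 1 : ℕ) : ℝ)) ^ h
          = ((h : ℝ) / ((h - 1 : ℕ) : ℝ)) ^ (h - 1) * ((h : ℝ) / ((h - 1 : ℕ) : ℝ)) := by
        rw [← pow_succ]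
        congr 1
        omega
      have e4 : (((h - 1 : ℕ) : ℝ) / (h : ℝ)) ^ (h - 1)
          * ((h : ℝ) / ((h - 1 : ℕ) : ℝ)) ^ (h - 1) = 1 := by
        rw [← mul_pow]
        have : ((h - 1 : ℕ) : ℝ) / (h : ℝ) * ((h : ℝ) / ((h - 1 : ℕ) : ℝ)) = 1 := by
          rw [div_mul_div_comm, mul_comm]
          exact div_self (ne_of_gt (by positivity))
        rw [this, one_pow]
      have hconst : ((1 : ℝ) - 1 / (h : ℝ)) ^ (h - 1) / (h : ℝ)
          * ((h : ℝ) / ((h - 1 : ℕ) : ℝ)) ^ h = 1 / ((h - 1 : ℕ) : ℝ) := by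
        rw [hone, e3]
        have rearr : (((h - 1 : ℕ) : ℝ) / (h : ℝ)) ^ (h - 1) / (h : ℝ)
            * ((((h : ℝ) / ((h - 1 : ℕ) : ℝ)) ^ (h - 1)) * ((h : ℝ) / ((h - 1 : ℕ) : ℝ)))
            = ((((h - 1 : ℕ) : ℝ) / (h : ℝ)) ^ (h - 1)
                * ((h : ℝ) / ((h - 1 : ℕ) : ℝ)) ^ (h - 1))
              * (((h : ℝ) / ((h - 1 : ℕ) : ℝ)) / (h : ℝ)) := by ring
        rw [rearr, e4, one_mul, div_div, mul_comm, ← div_div, div_self (ne_of_gt hH0)]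
      have hc2 : (1 - ε) * (((1 : ℝ) - 1 / (h : ℝ)) ^ (h - 1) / (h : ℝ))
          * ((h : ℝ) / ((h - 1 : ℕ) : ℝ)) ^ h = (1 - ε) * (1 / ((h - 1 : ℕ) : ℝ)) := by
        rw [mul_assoc, hconst]
      rw [hprod, hc2]
      have hR0 : (0 : ℝ) ≤ (m : ℝ) ^ ((2 : ℝ) - 1 / (h : ℝ)) :=
        Real.rpow_nonneg (Nat.cast_nonneg m) _
      have hRHS0 : (0 : ℝ) ≤ ((n ^ h * (d + 1) : ℕ) : ℝ) := Nat.cast_nonneg _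
      rcases le_or_gt 1 ε with hε1 | hε1
      · -- ε ≥ 1 : left side nonpositive
        have hL : (1 - ε) * (1 / ((h - 1 : ℕ) : ℝ)) * (m : ℝ) ^ ((2 : ℝ) - 1 / (h : ℝ)) ≤ 0 := by
          apply mul_nonpos_of_nonpos_of_nonneg _ hR0
          apply mul_nonpos_of_nonpos_of_nonneg (by linarith) (by positivity)
        linarith
      · -- ε < 1
        have h1ε : (0 : ℝ) ≤ 1 - ε := by linarith
        have hexp0 : (0 : ℝ) ≤ (2 : ℝ) - 1 / (h : ℝ) := by
          have : 1 / (h : ℝ) ≤ 1 := by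
            rw [div_le_one hH0]
            exact_mod_cast hh
          linarith
        have hd_le : (d : ℝ) ≤ (n : ℝ) ^ (h - 1) := by
          rw [← hdnr]
          nlinarith
        have hmle : (m : ℝ) ≤ (n : ℝ) ^ h * (1 + 1 / (n : ℝ)) := by
          have expand : (n : ℝ) ^ h * (1 + 1 / (n : ℝ)) = (n : ℝ) ^ h + (n : ℝ) ^ (h - 1) := by
            rw [hnh]
            field_simp
          rw [hmr, expand]
          linarith
        have hb1 : (1 : ℝ) ≤ 1 + 1 / (n : ℝ) := by
          have : (0 : ℝ) ≤ 1 / (n : ℝ) := by positivity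
          linarith
        have step1 : (m : ℝ) ^ ((2 : ℝ) - 1 / (h : ℝ))
            ≤ ((n : ℝ) ^ h * (1 + 1 / (n : ℝ))) ^ ((2 : ℝ) - 1 / (h : ℝ)) :=
          Real.rpow_le_rpow (Nat.cast_nonneg m) hmle hexp0
        have step2 : ((n : ℝ) ^ h * (1 + 1 / (n : ℝ))) ^ ((2 : ℝ) - 1 / (h : ℝ))
            = ((n : ℝ) ^ h) ^ ((2 : ℝ) - 1 / (h : ℝ))
              * (1 + 1 / (n : ℝ)) ^ ((2 : ℝ) - 1 / (h : ℝ)) :=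
          Real.mul_rpow (by positivity) (by positivity)
        have step3 : ((n : ℝ) ^ h) ^ ((2 : ℝ) - 1 / (h : ℝ)) = (n : ℝ) ^ (2 * h - 1 : ℕ) := by
          rw [← Real.rpow_natCast (n : ℝ) h, ← Real.rpow_mul (le_of_lt hn0),
            ← Real.rpow_natCast (n : ℝ) (2 * h - 1)]
          congr 1
          rw [Nat.cast_sub (by omega : 1 ≤ 2 * h)]
          push_cast
          field_simp
        have step4 : (1 + 1 / (n : ℝ)) ^ ((2 : ℝ) - 1 / (h : ℝ))
            ≤ (1 + 1 / (n : ℝ)) ^ ((2 : ℕ) : ℝ) := by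
          apply Real.rpow_le_rpow_of_exponent_le hb1
          have : (0 : ℝ) ≤ 1 / (h : ℝ) := by positivity
          push_cast
          linarith
        have step5 : (1 + 1 / (n : ℝ)) ^ ((2 : ℕ) : ℝ) = (1 + 1 / (n : ℝ)) ^ (2 : ℕ) :=
          Real.rpow_natCast _ 2
        have step6 : (1 + 1 / (n : ℝ)) ^ (2 : ℕ) ≤ 1 + 3 / (n : ℝ) := by
          have h1n : 1 / (n : ℝ) ≤ 1 := by
            rw [div_le_one hn0]
            exact hnr
          have hinv0 : (0 : ℝ) ≤ 1 / (n : ℝ) := by positivity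
          have key : (1 / (n : ℝ)) * (1 / (n : ℝ)) ≤ 1 / (n : ℝ) := by nlinarith
          have expand : (1 + 1 / (n : ℝ)) ^ (2 : ℕ)
              = 1 + 2 * (1 / (n : ℝ)) + (1 / (n : ℝ)) * (1 / (n : ℝ)) := by ring
          have e3n : (3 : ℝ) / (n : ℝ) = 3 * (1 / (n : ℝ)) := by ring
          rw [expand, e3n]
          linarith
        have hRbound : (m : ℝ) ^ ((2 : ℝ) - 1 / (h : ℝ))
            ≤ (n : ℝ) ^ (2 * h - 1 : ℕ) * (1 + 3 / (n : ℝ)) := by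
          calc (m : ℝ) ^ ((2 : ℝ) - 1 / (h : ℝ))
              ≤ ((n : ℝ) ^ h * (1 + 1 / (n : ℝ))) ^ ((2 : ℝ) - 1 / (h : ℝ)) := step1
            _ = ((n : ℝ) ^ h) ^ ((2 : ℝ) - 1 / (h : ℝ))
                * (1 + 1 / (n : ℝ)) ^ ((2 : ℝ) - 1 / (h : ℝ)) := step2
            _ ≤ ((n : ℝ) ^ h) ^ ((2 : ℝ) - 1 / (h : ℝ)) * (1 + 3 / (n : ℝ)) := by
                have h0 : (0 : ℝ) ≤ ((n : ℝ) ^ h) ^ ((2 : ℝ) - 1 / (h : ℝ)) :=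
                  Real.rpow_nonneg (by positivity) _
                have := le_trans step4 (le_of_eq step5)
                exact mul_le_mul_of_nonneg_left (le_trans this step6) h0
            _ = (n : ℝ) ^ (2 * h - 1 : ℕ) * (1 + 3 / (n : ℝ)) := by rw [step3]
        have hεn : 3 / (n : ℝ) ≤ ε := by
          have hceil : (3 / ε : ℝ) ≤ ((Nat.ceil (3 / ε) : ℕ) : ℝ) := Nat.le_ceil _
          have hcn : ((Nat.ceil (3 / ε) : ℕ) : ℝ) ≤ (n : ℝ) := by
            have : (Nat.ceil (3 / ε) : ℕ) ≤ n := by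
              calc (Nat.ceil (3 / ε) : ℕ) ≤ t := le_trans (le_max_right m₀ _) (le_max_left _ 1)
                _ ≤ n := by rw [hn]; exact Nat.le_mul_of_pos_left t (by omega)
            exact_mod_cast this
          have h3n : 3 / ε ≤ (n : ℝ) := le_trans hceil hcn
          rw [div_le_iff₀ hε] at h3n
          rw [div_le_iff₀ hn0]
          nlinarith
        have hshrink : (1 - ε) * (1 + 3 / (n : ℝ)) ≤ 1 := by
          have h3n0 : (0 : ℝ) ≤ 3 / (n : ℝ) := by positivity
          nlinarith
        have hRHSe : (n : ℝ) ^ (2 * h - 1 : ℕ)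
            = ((h - 1 : ℕ) : ℝ) * ((n : ℝ) ^ h * (d : ℝ)) := by
          have : (n : ℝ) ^ (2 * h - 1 : ℕ) = (n : ℝ) ^ h * (n : ℝ) ^ (h - 1) := by
            rw [← pow_add]
            congr 1
            omega
          rw [this, ← hdnr]
          ring
        calc (1 - ε) * (1 / ((h - 1 : ℕ) : ℝ)) * (m : ℝ) ^ ((2 : ℝ) - 1 / (h : ℝ))
            ≤ (1 - ε) * (1 / ((h - 1 : ℕ) : ℝ))
              * ((n : ℝ) ^ (2 * h - 1 : ℕ) * (1 + 3 / (n : ℝ))) := by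
              apply mul_le_mul_of_nonneg_left hRbound
              positivity
          _ = (1 / ((h - 1 : ℕ) : ℝ)) * (n : ℝ) ^ (2 * h - 1 : ℕ)
              * ((1 - ε) * (1 + 3 / (n : ℝ))) := by ring
          _ ≤ (1 / ((h - 1 : ℕ) : ℝ)) * (n : ℝ) ^ (2 * h - 1 : ℕ) * 1 := by
              apply mul_le_mul_of_nonneg_left hshrink
              positivity
          _ = (n : ℝ) ^ h * (d : ℝ) := by
              rw [mul_one, hRHSe, one_div, ← mul_assoc,
                inv_mul_cancel₀ (ne_of_gt hK0), one_mul]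
          _ ≤ ((n ^ h * (d + 1) : ℕ) : ℝ) := by
              push_cast
              nlinarith [pow_pos hn0 h]
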